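/- Let X be a finite set, Y ⊆ X nonempty with complement Ȳ, and L an X × X matrix with det(1_Y + L) ≠ 0 where 1_Y is the block identity on Y (zero on Ȳ). Define the conditional L-ensemble on subsets Z ⊆ Y by Pr{Z} = det L_{Z ∪ Ȳ} / det(1_Y + L). Then this process is determinantal on Y with correlation kernel K = 1_Y − (1_Y + L)^{-1} restricted to Y × Y: for all distinct a_1,...,a_n ∈ Y, Σ_{Z ⊇ {a_1,...,a_n}} Pr{Z} = det[K(a_i,a_j)]_{i,j=1}^n. -/

import Mathlib

/-- Principal minor of `L` on the rows and columns indexed by the subset `S`. -/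
noncomputable def minorDet {X : Type*} [Fintype X] [DecidableEq X]
    (L : Matrix X X ℂ) (S : Finset X) : ℂ :=
  Matrix.det (Matrix.of fun i j : S => L i j)

open Finset Matrix Equiv

section Aux

variable {X : Type*} [Fintype X] [DecidableEq X]

lemma fix_mem_compl {T : Finset X} {σ : Equiv.Perm X} (hσ : ∀ x ∈ T, σ x = x) :
    ∀ x, x ∈ (Tᶜ : Finset X) ↔ σ x ∈ (Tᶜ : Finset X) := by
  intro x
  simp only [Finset.mem_compl]
  constructor
  · intro hx hsx
    exact hx (by simpa [hσ _ hsx] using (σ.injective (hσ _ hsx)) ▸ hsx)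
  · intro hx hxT
    exact hx (by rw [hσ _ hxT]; exact hxT)

lemma sum_perm_fix (L : Matrix X X ℂ) (T : Finset X) :
    ∑ σ ∈ Finset.univ.filter (fun σ : Equiv.Perm X => ∀ x ∈ T, σ x = x),
      ((Equiv.Perm.sign σ : ℤ) : ℂ) * ∏ x ∈ Tᶜ, L (σ x) x
    = minorDet L Tᶜ := by
  classical
  rw [minorDet, Matrix.det_apply']
  refine Finset.sum_bij' (fun σ hσ => σ.subtypePerm
      (fun x => (fix_mem_compl (T := T) (by simpa using hσ) x).symm))
    (fun τ _ => Equiv.Perm.ofSubtype τ) ?_ ?_ ?_ ?_ ?_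
  · intro τ _; exact Finset.mem_univ _
  · intro τ _
    simp only [Finset.mem_filter, Finset.mem_univ, true_and]
    intro x hx
    exact Equiv.Perm.ofSubtype_apply_of_not_mem τ (by simpa using hx)
  · intro σ hσ
    ext x
    by_cases hx : x ∈ (Tᶜ : Finset X)
    · rw [Equiv.Perm.ofSubtype_apply_of_mem _ hx]; congr!
    · rw [Equiv.Perm.ofSubtype_apply_of_not_mem _ hx]
      simp only [Finset.mem_filter, Finset.mem_univ, true_and] at hσ
      exact (hσ x (by simpa using hx)).symm
  · intro τ _
    ext x
    simp [Equiv.Perm.subtypePerm_apply,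
      Equiv.Perm.ofSubtype_apply_of_mem τ x.2]
  · intro σ hσ'
    have hσ : ∀ x ∈ T, σ x = x := by simpa using hσ'
    set τ : Equiv.Perm ((Tᶜ : Finset X) : Type _) := σ.subtypePerm (fun x => (fix_mem_compl hσ x).symm) with hτ
    have hof : Equiv.Perm.ofSubtype τ = σ := by
      ext x
      by_cases hx : x ∈ (Tᶜ : Finset X)
      · rw [Equiv.Perm.ofSubtype_apply_of_mem _ hx]; congr!
      · rw [Equiv.Perm.ofSubtype_apply_of_not_mem _ hx]
        exact (hσ x (by simpa using hx)).symm
    have hsgn : ((Equiv.Perm.sign σ : ℤ) : ℂ) = ((Equiv.Perm.sign τ : ℤ) : ℂ) := by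
      rw [← hof, Equiv.Perm.sign_ofSubtype]
    have hprod : ∏ x ∈ Tᶜ, L (σ x) x = ∏ i : (Tᶜ : Finset X), L (τ i) i := by
      rw [← Finset.prod_coe_sort]; congr!
    show ((Equiv.Perm.sign σ : ℤ) : ℂ) * ∏ x ∈ Tᶜ, L (σ x) x
      = ((Equiv.Perm.sign τ : ℤ) : ℂ)
        * ∏ i : (Tᶜ : Finset X), (Matrix.of fun i j : (Tᶜ : Finset X) => L i j) (τ i) i
    simp only [Matrix.of_apply]
    rw [hsgn, hprod]

lemma det_indicator_add (L : Matrix X X ℂ) (S : Finset X) :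
    (Matrix.diagonal (fun x => if x ∈ S then (1:ℂ) else 0) + L).det
    = ∑ T ∈ S.powerset, minorDet L Tᶜ := by
  classical
  set D : Matrix X X ℂ := Matrix.diagonal (fun x => if x ∈ S then (1:ℂ) else 0) with hD
  rw [Matrix.det_apply']
  have step1 : ∀ σ : Equiv.Perm X,
      (∏ x, (D + L) (σ x) x)
      = ∑ t ∈ (Finset.univ : Finset X).powerset,
          (∏ x ∈ t, D (σ x) x) * ∏ x ∈ Finset.univ \ t, L (σ x) x := by
    intro σ
    simp only [Matrix.add_apply]
    exact Finset.prod_add _ _ Finset.univ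
  simp_rw [step1, Finset.mul_sum]
  rw [Finset.sum_comm]
  rw [← Finset.sum_subset (Finset.powerset_mono.2 (Finset.subset_univ S))
    (fun t _ ht => ?_)]
  · refine Finset.sum_congr rfl (fun t ht => ?_)
    rw [Finset.mem_powerset] at ht
    have hDt : ∀ σ : Equiv.Perm X,
        (∏ x ∈ t, D (σ x) x) = if ∀ x ∈ t, σ x = x then 1 else 0 := by
      intro σ
      split_ifs with h
      · refine Finset.prod_eq_one (fun x hx => ?_)
        simp [hD, Matrix.diagonal_apply, h x hx, ht hx]
      · push_neg at h
        obtain ⟨x, hx, hne⟩ := h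
        refine Finset.prod_eq_zero hx ?_
        simp [hD, Matrix.diagonal_apply, hne]
    rw [← sum_perm_fix L t, Finset.sum_filter]
    refine Finset.sum_congr rfl (fun σ _ => ?_)
    rw [hDt, ← Finset.compl_eq_univ_sdiff]
    split_ifs <;> simp
  · refine Finset.sum_eq_zero (fun σ _ => ?_)
    rw [Finset.mem_powerset] at ht
    obtain ⟨x, hx, hxS⟩ := Finset.not_subset.1 ht
    have hz : D (σ x) x = 0 := by
      simp only [hD, Matrix.diagonal_apply]
      split_ifs with h1 h2
      · exact absurd (h1 ▸ h2) hxS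
      · rfl
      · rfl
    have hp : (∏ y ∈ t, D (σ y) y) = 0 := Finset.prod_eq_zero hx hz
    rw [hp, zero_mul, mul_zero]

end Aux

/-- conditional L-ensembles: let `Y ⊆ X` be nonempty, `1_Y` the block identity
supported on `Y`, and suppose `det(1_Y + L) ≠ 0`.  The conditional L-ensemble
`Pr{Z} = det L_{Z ∪ Ȳ} / det(1_Y + L)` (for `Z ⊆ Y`) is determinantal on `Y` with kernel
`K = 1_Y − (1_Y + L)⁻¹` restricted to `Y × Y`. -/
theorem conditional_L_ensemble_determinantal {X : Type*} [Fintype X] [DecidableEq X]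
    (Y : Finset X) (hY : Y.Nonempty) (L : Matrix X X ℂ)
    (E : Matrix X X ℂ) (hE : E = Matrix.diagonal fun x => if x ∈ Y then (1 : ℂ) else 0)
    (hdet : Matrix.det (E + L) ≠ 0)
    (n : ℕ) (a : Fin n → X) (ha : Function.Injective a) (haY : ∀ i, a i ∈ Y) :
    (∑ Z ∈ Finset.univ.filter (fun Z : Finset X => Z ⊆ Y ∧ ∀ i, a i ∈ Z),
        minorDet L (Z ∪ Yᶜ)) / Matrix.det (E + L)
    = Matrix.det (Matrix.of fun i j : Fin n => (E - (E + L)⁻¹) (a i) (a j)) := by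
  classical
  set A : Finset X := Finset.image a Finset.univ with hA
  have hAY : A ⊆ Y := by
    intro x hx
    simp only [hA, Finset.mem_image, Finset.mem_univ, true_and] at hx
    obtain ⟨i, rfl⟩ := hx; exact haY i
  -- Step 1 : the numerator equals det (1_{Y\A} + L)
  have hsum : (∑ Z ∈ Finset.univ.filter (fun Z : Finset X => Z ⊆ Y ∧ ∀ i, a i ∈ Z),
        minorDet L (Z ∪ Yᶜ))
      = (Matrix.diagonal (fun x => if x ∈ Y \ A then (1:ℂ) else 0) + L).det := by
    rw [det_indicator_add]
    refine Finset.sum_bij' (fun Z _ => Y \ Z) (fun T _ => Y \ T) ?_ ?_ ?_ ?_ ?_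
    · intro Z hZ
      simp only [Finset.mem_filter, Finset.mem_univ, true_and] at hZ
      rw [Finset.mem_powerset]
      refine Finset.sdiff_subset_sdiff (le_refl Y) ?_
      intro x hx
      simp only [hA, Finset.mem_image, Finset.mem_univ, true_and] at hx
      obtain ⟨i, rfl⟩ := hx; exact hZ.2 i
    · intro T hT
      rw [Finset.mem_powerset] at hT
      simp only [Finset.mem_filter, Finset.mem_univ, true_and]
      refine ⟨Finset.sdiff_subset, fun i => ?_⟩
      rw [Finset.mem_sdiff]
      refine ⟨haY i, fun hi => ?_⟩
      exact (Finset.mem_sdiff.1 (hT hi)).2 (by simp [hA])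
    · intro Z hZ
      simp only [Finset.mem_filter, Finset.mem_univ, true_and] at hZ
      exact Finset.sdiff_sdiff_eq_self hZ.1
    · intro T hT
      rw [Finset.mem_powerset] at hT
      exact Finset.sdiff_sdiff_eq_self (hT.trans Finset.sdiff_subset)
    · intro Z _
      congr 1
      ext x
      simp only [Finset.mem_union, Finset.mem_compl, Finset.mem_sdiff]
      tauto
  -- Step 2 : the matrix machinery
  set M : Matrix X X ℂ := E + L with hM
  have hMinv : M * M⁻¹ = 1 := Matrix.mul_nonsing_inv M (isUnit_iff_ne_zero.2 hdet)
  set P : Matrix (Fin n) X ℂ := Matrix.of (fun i x => if x = a i then 1 else 0) with hP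
  have hPMP : ∀ N : Matrix X X ℂ,
      P * N * Pᵀ = Matrix.of (fun i j => N (a i) (a j)) := by
    intro N
    ext i j
    simp [hP, Matrix.mul_apply, Matrix.transpose_apply, ite_mul, mul_ite]
  have hRHS : Matrix.of (fun i j : Fin n => (E - M⁻¹) (a i) (a j))
      = 1 - P * M⁻¹ * Pᵀ := by
    rw [hPMP]
    ext i j
    simp only [Matrix.of_apply, Matrix.sub_apply, Matrix.one_apply]
    congr 1
    simp [hE, Matrix.diagonal_apply, ha.eq_iff, haY i]
  have hPtP : Pᵀ * P = Matrix.diagonal (fun x => if x ∈ A then (1:ℂ) else 0) := by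
    ext x y
    simp only [Matrix.mul_apply, Matrix.transpose_apply, hP, Matrix.of_apply,
      Matrix.diagonal_apply]
    by_cases hxy : x = y
    · subst hxy
      by_cases hx : x ∈ A
      · simp only [hA, Finset.mem_image, Finset.mem_univ, true_and] at hx
        obtain ⟨i, hi⟩ := hx
        rw [if_pos rfl, if_pos (by simp [hA, ← hi])]
        rw [Finset.sum_eq_single i]
        · rw [if_pos hi.symm]; norm_num
        · intro j _ hj
          rw [if_neg, zero_mul]
          intro h; exact hj (ha (hi.trans h)).symm
        · intro h; exact absurd (Finset.mem_univ i) h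
      · rw [if_pos rfl, if_neg hx]
        refine Finset.sum_eq_zero (fun i _ => ?_)
        rw [if_neg, zero_mul]
        intro h; exact hx (by simp [hA, h])
    · rw [if_neg hxy]
      refine Finset.sum_eq_zero (fun i _ => ?_)
      by_cases h : x = a i
      · have hy : ¬ y = a i := fun hy => hxy (h.trans hy.symm)
        rw [if_neg hy, mul_zero]
      · rw [if_neg h, zero_mul]
  have hdiag : E - Pᵀ * P
      = Matrix.diagonal (fun x => if x ∈ Y \ A then (1:ℂ) else 0) := by
    rw [hPtP, hE, Matrix.diagonal_sub]
    refine congrArg Matrix.diagonal (funext fun x => ?_)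
    by_cases hxA : x ∈ A
    · simp [Finset.mem_sdiff, hxA, hAY hxA]
    · by_cases hxY : x ∈ Y <;> simp [Finset.mem_sdiff, hxA, hxY]
  have key : Matrix.det M * Matrix.det ((1 : Matrix (Fin n) (Fin n) ℂ) - P * M⁻¹ * Pᵀ)
      = (Matrix.diagonal (fun x => if x ∈ Y \ A then (1:ℂ) else 0) + L).det := by
    have h1 : (1 : Matrix (Fin n) (Fin n) ℂ) - P * M⁻¹ * Pᵀ
        = 1 + P * (-(M⁻¹ * Pᵀ)) := by
      rw [Matrix.mul_neg, ← Matrix.mul_assoc, ← sub_eq_add_neg]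
    rw [h1, Matrix.det_one_add_mul_comm, ← Matrix.det_mul]
    congr 1
    have h2 : -(M⁻¹ * Pᵀ) * P = -(M⁻¹ * (Pᵀ * P)) := by
      rw [Matrix.neg_mul, Matrix.mul_assoc]
    rw [h2, Matrix.mul_add, Matrix.mul_one, Matrix.mul_neg, ← Matrix.mul_assoc, hMinv, Matrix.one_mul,
      ← hdiag, hM]
    abel
  rw [hsum, div_eq_iff hdet, hRHS, ← key, mul_comm]
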